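/- Let R be a commutative ring, let k ≥ 2, let x_1, …, x_k be invertible elements of R with x̄_i := x_i^{−1}, let a = (a_1, a_2, …) be a sequence in R, and let m be any integer. Then h^{oo}_m((x_1,…,x_{k−1}),(x̄_1,…,x̄_{k−1})|a) − h^{oo}_m((x_2,…,x_k),(x̄_2,…,x̄_k)|a) = (x_1 + x̄_1 − x_k − x̄_k) · h^{oo}_{m−1}((x_1,…,x_k),(x̄_1,…,x̄_k)|a). -/

import Mathlib

open Finset

noncomputable def geom {R : Type*} [CommRing R] (x : R) : PowerSeries R :=
  PowerSeries.mk fun k => x ^ k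

noncomputable def lin {R : Type*} [CommRing R] (a : R) : PowerSeries R :=
  1 + PowerSeries.C a * PowerSeries.X

noncomputable def facpow {R : Type*} [CommRing R] (x : R) (a : ℕ → R) (m : ℕ) : R :=
  ∏ j ∈ Finset.range m, (x + a (j + 1))

noncomputable def hgl {R : Type*} [CommRing R] {n : ℕ} (x : Fin n → R) (a : ℕ → R) (m : ℤ) : R :=
  if 0 ≤ m then
    PowerSeries.coeff m.toNat
      ((∏ i, geom (x i)) * ∏ j ∈ Finset.range (n + m.toNat - 1), lin (a (j + 1)))
  else 0

noncomputable def hsp {R : Type*} [CommRing R] {n : ℕ} (x : Fin n → Rˣ) (a : ℕ → R) (m : ℤ) : R :=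
  if 0 ≤ m then
    PowerSeries.coeff m.toNat
      ((∏ i, geom ((x i : R)) * geom (((x i)⁻¹ : Rˣ) : R)) *
        ∏ j ∈ Finset.range (n + m.toNat - 1), lin (a (j + 1)))
  else 0

noncomputable def hoo {R : Type*} [CommRing R] {n : ℕ} (x : Fin n → Rˣ) (a : ℕ → R) (m : ℤ) : R :=
  if 0 ≤ m then
    PowerSeries.coeff m.toNat
      ((1 + PowerSeries.X) * (∏ i, geom ((x i : R)) * geom (((x i)⁻¹ : Rˣ) : R)) *
        ∏ j ∈ Finset.range (n + m.toNat - 1), lin (a (j + 1)))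
  else 0

noncomputable def heo {R : Type*} [CommRing R] {n : ℕ} (x : Fin n → Rˣ) (a : ℕ → R) (m : ℤ) : R :=
  if 0 ≤ m then
    if h : n = 1 then
      (PowerSeries.coeff m.toNat
        ((geom ((x ⟨0, by omega⟩ : Rˣ) : R) + geom (((x ⟨0, by omega⟩)⁻¹ : Rˣ) : R)) *
          ∏ j ∈ Finset.range m.toNat, lin (a (j + 1))))
        - (if m = 0 then 1 else 0)
    else
      PowerSeries.coeff m.toNat
        ((1 - PowerSeries.X ^ 2) * (∏ i, geom ((x i : R)) * geom (((x i)⁻¹ : Rˣ) : R)) *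
          ∏ j ∈ Finset.range (n + m.toNat - 1), lin (a (j + 1)))
  else 0

noncomputable def heod {R : Type*} [CommRing R] {n : ℕ} (x : Fin n → Rˣ) (a : ℕ → R) (m : ℤ) : R :=
  if 0 < m then
    if h : 0 < n then
      PowerSeries.coeff m.toNat
        ((geom ((x ⟨0, h⟩ : Rˣ) : R) - geom (((x ⟨0, h⟩)⁻¹ : Rˣ) : R)) *
          (∏ i ∈ Finset.univ.filter (fun i : Fin n => i ≠ ⟨0, h⟩),
            geom ((x i : R)) * geom (((x i)⁻¹ : Rˣ) : R)) *
          ∏ j ∈ Finset.range (n + m.toNat - 1), lin (a (j + 1)))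
    else 0
  else 0


lemma geom_mul_one_sub {R : Type*} [CommRing R] (x : R) :
    geom x * (1 - PowerSeries.C x * PowerSeries.X) = 1 := by
  ext n
  cases n with
  | zero =>
    simp [geom, PowerSeries.coeff_zero_eq_constantCoeff]
  | succ n =>
    rw [mul_sub, mul_one, map_sub, mul_left_comm, PowerSeries.coeff_C_mul,
      PowerSeries.coeff_succ_mul_X]
    simp [geom, pow_succ, mul_comm]

lemma G_mul_P {R : Type*} [CommRing R] (u : Rˣ) :
    (geom (u : R) * geom (((u⁻¹ : Rˣ) : R))) *
      ((1 - PowerSeries.C (u : R) * PowerSeries.X) *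
        (1 - PowerSeries.C ((u⁻¹ : Rˣ) : R) * PowerSeries.X)) = 1 := by
  have h1 := geom_mul_one_sub (R := R) (u : R)
  have h2 := geom_mul_one_sub (R := R) ((u⁻¹ : Rˣ) : R)
  calc (geom (u : R) * geom (((u⁻¹ : Rˣ) : R))) *
      ((1 - PowerSeries.C (u : R) * PowerSeries.X) *
        (1 - PowerSeries.C ((u⁻¹ : Rˣ) : R) * PowerSeries.X))
      = (geom (u : R) * (1 - PowerSeries.C (u : R) * PowerSeries.X)) *
        (geom (((u⁻¹ : Rˣ) : R)) *
          (1 - PowerSeries.C ((u⁻¹ : Rˣ) : R) * PowerSeries.X)) := by ring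
    _ = 1 := by rw [h1, h2, mul_one]

lemma P_diff {R : Type*} [CommRing R] (u v : Rˣ) :
    (1 - PowerSeries.C (v : R) * PowerSeries.X) *
        (1 - PowerSeries.C ((v⁻¹ : Rˣ) : R) * PowerSeries.X) -
      (1 - PowerSeries.C (u : R) * PowerSeries.X) *
        (1 - PowerSeries.C ((u⁻¹ : Rˣ) : R) * PowerSeries.X) =
      PowerSeries.C ((u : R) + ((u⁻¹ : Rˣ) : R) - (v : R) - ((v⁻¹ : Rˣ) : R)) *
        PowerSeries.X := by
  have h1 : PowerSeries.C (u : R) * PowerSeries.C ((u⁻¹ : Rˣ) : R) = 1 := by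
    rw [← map_mul, Units.mul_inv, map_one]
  have h2 : PowerSeries.C (v : R) * PowerSeries.C ((v⁻¹ : Rˣ) : R) = 1 := by
    rw [← map_mul, Units.mul_inv, map_one]
  simp only [map_sub, map_add]
  linear_combination (PowerSeries.X ^ 2) * h2 - (PowerSeries.X ^ 2) * h1

/-- recurrence relation for `h^oo`. -/
theorem hoo_recurrence {R : Type*} [CommRing R] (k : ℕ) (hk : 2 ≤ k)
    (x : Fin k → Rˣ) (a : ℕ → R) (m : ℤ) :
    hoo (fun i : Fin (k - 1) => x ⟨(i : ℕ), by have := i.isLt; omega⟩) a m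
      - hoo (fun i : Fin (k - 1) => x ⟨(i : ℕ) + 1, by have := i.isLt; omega⟩) a m =
    ((x ⟨0, by omega⟩ : R) + (((x ⟨0, by omega⟩)⁻¹ : Rˣ) : R)
        - (x ⟨k - 1, by omega⟩ : R) - (((x ⟨k - 1, by omega⟩)⁻¹ : Rˣ) : R)) *
      hoo x a (m - 1) := by
  obtain ⟨n, rfl⟩ : ∃ n, k = n + 1 := ⟨k - 1, by omega⟩
  set G : Fin (n + 1) → PowerSeries R :=
    fun i => geom ((x i : R)) * geom (((x i)⁻¹ : Rˣ) : R) with hG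
  set P : Rˣ → PowerSeries R :=
    fun u => (1 - PowerSeries.C (u : R) * PowerSeries.X) *
      (1 - PowerSeries.C ((u⁻¹ : Rˣ) : R) * PowerSeries.X) with hP
  set F : PowerSeries R := ∏ i, G i with hF
  set c : R := (x ⟨0, by omega⟩ : R) + (((x ⟨0, by omega⟩)⁻¹ : Rˣ) : R)
      - (x ⟨n + 1 - 1, by omega⟩ : R) - (((x ⟨n + 1 - 1, by omega⟩)⁻¹ : Rˣ) : R) with hc
  have hA : (∏ i : Fin n, G (Fin.castSucc i)) = F * P (x (Fin.last n)) := by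
    calc (∏ i : Fin n, G (Fin.castSucc i))
        = (∏ i : Fin n, G (Fin.castSucc i)) * (G (Fin.last n) * P (x (Fin.last n))) := by
          rw [hG, hP, G_mul_P, mul_one]
      _ = F * P (x (Fin.last n)) := by rw [hF, Fin.prod_univ_castSucc]; ring
  have hB : (∏ i : Fin n, G i.succ) = F * P (x 0) := by
    calc (∏ i : Fin n, G i.succ)
        = (∏ i : Fin n, G i.succ) * (G 0 * P (x 0)) := by rw [hG, hP, G_mul_P, mul_one]
      _ = F * P (x 0) := by rw [hF, Fin.prod_univ_succ]; ring
  have hlast : (⟨n + 1 - 1, by omega⟩ : Fin (n + 1)) = Fin.last n := rfl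
  have h0' : (⟨0, by omega⟩ : Fin (n + 1)) = 0 := rfl
  have key : (∏ i : Fin n, G (Fin.castSucc i)) - (∏ i : Fin n, G i.succ)
      = PowerSeries.C c * PowerSeries.X * F := by
    rw [hA, hB, ← mul_sub, hP]
    rw [P_diff (x 0) (x (Fin.last n))]
    rw [hc, hlast, h0']
    ring
  unfold hoo
  by_cases hm : 0 ≤ m - 1
  · have h0 : 0 ≤ m := by omega
    rw [if_pos h0, if_pos h0, if_pos hm]
    obtain ⟨p, hp⟩ : ∃ p, m.toNat = p + 1 := ⟨m.toNat - 1, by omega⟩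
    have e1 : (m - 1).toNat = p := by omega
    rw [e1, hp]
    have e2 : n + 1 + p - 1 = n + (p + 1) - 1 := by omega
    rw [e2]
    simp only [Nat.add_sub_cancel]
    set L : PowerSeries R := ∏ j ∈ Finset.range (n + (p + 1) - 1), lin (a (j + 1)) with hL
    have hA' : (∏ i : Fin (n + 1 - 1),
        geom ((x ⟨(i : ℕ), by have := i.isLt; omega⟩ : Rˣ) : R) *
          geom (((x ⟨(i : ℕ), by have := i.isLt; omega⟩)⁻¹ : Rˣ) : R))
        = ∏ i : Fin n, G (Fin.castSucc i) := rfl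
    have hB' : (∏ i : Fin (n + 1 - 1),
        geom ((x ⟨(i : ℕ) + 1, by have := i.isLt; omega⟩ : Rˣ) : R) *
          geom (((x ⟨(i : ℕ) + 1, by have := i.isLt; omega⟩)⁻¹ : Rˣ) : R))
        = ∏ i : Fin n, G i.succ := rfl
    rw [hA', hB', ← map_sub]
    have harr : (1 + PowerSeries.X) * (∏ i : Fin n, G (Fin.castSucc i)) * L -
        (1 + PowerSeries.X) * (∏ i : Fin n, G i.succ) * L =
        (1 + PowerSeries.X) *
          ((∏ i : Fin n, G (Fin.castSucc i)) - (∏ i : Fin n, G i.succ)) * L := by ring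
    rw [harr, key]
    have harr2 : (1 + PowerSeries.X) * (PowerSeries.C c * PowerSeries.X * F) * L =
        PowerSeries.C c * (((1 + PowerSeries.X) * F * L) * PowerSeries.X) := by ring
    rw [harr2, PowerSeries.coeff_C_mul, PowerSeries.coeff_succ_mul_X]
  · rw [if_neg hm, mul_zero]
    by_cases h0 : 0 ≤ m
    · have hm0 : m = 0 := by omega
      subst hm0
      rw [if_pos le_rfl, if_pos le_rfl]
      simp only [Nat.add_sub_cancel]
      set L : PowerSeries R := ∏ j ∈ Finset.range (n + (0 : ℤ).toNat - 1), lin (a (j + 1))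
        with hL
      have hA' : (∏ i : Fin (n + 1 - 1),
          geom ((x ⟨(i : ℕ), by have := i.isLt; omega⟩ : Rˣ) : R) *
            geom (((x ⟨(i : ℕ), by have := i.isLt; omega⟩)⁻¹ : Rˣ) : R))
          = ∏ i : Fin n, G (Fin.castSucc i) := rfl
      have hB' : (∏ i : Fin (n + 1 - 1),
          geom ((x ⟨(i : ℕ) + 1, by have := i.isLt; omega⟩ : Rˣ) : R) *
            geom (((x ⟨(i : ℕ) + 1, by have := i.isLt; omega⟩)⁻¹ : Rˣ) : R))
          = ∏ i : Fin n, G i.succ := rfl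
      rw [hA', hB', ← map_sub]
      have harr : (1 + PowerSeries.X) * (∏ i : Fin n, G (Fin.castSucc i)) * L -
          (1 + PowerSeries.X) * (∏ i : Fin n, G i.succ) * L =
          (1 + PowerSeries.X) *
            ((∏ i : Fin n, G (Fin.castSucc i)) - (∏ i : Fin n, G i.succ)) * L := by ring
      rw [harr, key]
      have harr2 : (1 + PowerSeries.X) * (PowerSeries.C c * PowerSeries.X * F) * L =
          (PowerSeries.C c * ((1 + PowerSeries.X) * F * L)) * PowerSeries.X := by ring
      rw [harr2]
      exact PowerSeries.coeff_zero_mul_X _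
    · rw [if_neg h0, if_neg h0]
      simp
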